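/- For the Undecided-State Dynamics, suppose the current color configuration c satisfies c_1 ≥ (1+α)·c_i for some constant α > 0 and every color i ≠ 1, and set γ = (1+α)^{-1}. Then E[C_1' + 2Q' | c] ≥ n·(1 + Γ(c)), where Γ(c) = (1 − (c_1 + 2q)/n)² + 2(1−γ)·(R(c) − 1)·(c_1/n)². -/

import Mathlib

open Finset

/-- A state of the Undecided-State Dynamics: each of the `n` nodes is either
undecided (`none`) or supports one of `k` colors. -/
abbrev Config (n k : ℕ) := Fin n → Option (Fin k)

/-- Number of nodes supporting color `i`. -/
def colorCount {n k : ℕ} (σ : Config n k) (i : Fin k) : ℕ :=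
  (Finset.univ.filter fun v => σ v = some i).card

/-- Number of undecided nodes. -/
def undecidedCount {n k : ℕ} (σ : Config n k) : ℕ :=
  (Finset.univ.filter fun v => σ v = none).card

/-- Update rule for one node: an undecided node adopts the sampled state; a colored
node keeps its color iff the sampled node does not support a different color. -/
def updateNode {k : ℕ} : Option (Fin k) → Option (Fin k) → Option (Fin k)
  | none, s => s
  | some c, none => some c
  | some c, some c' => if c' = c then some c else none

/-- Apply one synchronous round given the samples `s` of all nodes. -/
def applySample {n k : ℕ} (σ : Config n k) (s : Fin n → Fin n) : Config n k :=
  fun v => updateNode (σ v) (σ (s v))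

/-- One round of the Undecided-State Dynamics: every node independently samples a
uniformly random node. -/
noncomputable def step {n k : ℕ} [NeZero n] (σ : Config n k) : PMF (Config n k) :=
  (PMF.uniformOfFintype (Fin n → Fin n)).map (applySample σ)

/-- Distribution of the configuration after `t` rounds, starting from `σ`. -/
noncomputable def process {n k : ℕ} [NeZero n] (σ : Config n k) : ℕ → PMF (Config n k)
  | 0 => PMF.pure σ
  | t + 1 => (process σ t).bind step

/-- Joint distribution of the whole trajectory of the first `t` rounds (most recent
configuration first). -/
noncomputable def pathProcess {n k : ℕ} [NeZero n] (σ : Config n k) :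
    ℕ → PMF (List (Config n k))
  | 0 => PMF.pure [σ]
  | t + 1 => (pathProcess σ t).bind fun l => (step l.headI).map fun τ => τ :: l

/-- Probability of an event under a PMF. -/
noncomputable def pr {α : Type*} (p : PMF α) (E : Set α) : ENNReal := p.toOuterMeasure E

/-- Expected value of `f` after one round of the dynamics starting from `σ`. -/
noncomputable def expv {n k : ℕ} [NeZero n] (σ : Config n k) (f : Config n k → ℝ) : ℝ :=
  ∑ τ : Config n k, ((step σ) τ).toReal * f τ

/-- Size `c₁` of the plurality (largest) color class. -/
def plur {n k : ℕ} (σ : Config n k) : ℕ := Finset.univ.sup (colorCount σ)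

/-- Monochromatic distance `md(c) = ∑ᵢ (cᵢ/c₁)²`. -/
noncomputable def md {n k : ℕ} (σ : Config n k) : ℝ :=
  ∑ i : Fin k, ((colorCount σ i : ℝ) / (plur σ : ℝ)) ^ 2

/-- `R(c) = (∑ᵢ cᵢ)/c₁ = (n − q)/c₁`. -/
noncomputable def Rval {n k : ℕ} (σ : Config n k) : ℝ :=
  ((n : ℝ) - (undecidedCount σ : ℝ)) / (plur σ : ℝ)

/-- The process has converged: all `n` nodes support one and the same color. -/
def mono {n k : ℕ} (σ : Config n k) : Prop := ∃ i : Fin k, ∀ v : Fin n, σ v = some i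


section USDHelpers

/-- Count of nodes in state `o`. -/
def cnt {n k : ℕ} (σ : Config n k) (o : Option (Fin k)) : ℕ :=
  (Finset.univ.filter fun v => σ v = o).card

lemma cnt_none {n k : ℕ} (σ : Config n k) : cnt σ none = undecidedCount σ := rfl

lemma cnt_some {n k : ℕ} (σ : Config n k) (i : Fin k) : cnt σ (some i) = colorCount σ i := rfl

lemma sum_fiber {n k : ℕ} (σ : Config n k) (F : Option (Fin k) → ℝ) :
    ∑ w, F (σ w) = ∑ o, (cnt σ o : ℝ) * F o := by
  classical
  rw [← Finset.sum_fiberwise' Finset.univ σ F]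
  refine Finset.sum_congr rfl fun o _ => ?_
  rw [Finset.sum_const, cnt, nsmul_eq_mul]

lemma cnt_sum {n k : ℕ} (σ : Config n k) : ∑ o, (cnt σ o : ℝ) = n := by
  have := sum_fiber σ (fun _ => (1:ℝ))
  simp at this
  simp [← this]

lemma pmf_map_sum {A B : Type*} [Fintype A] [Fintype B] (p : PMF A) (g : A → B)
    (f : B → ℝ) : ∑ b : B, ((p.map g) b).toReal * f b = ∑ a : A, (p a).toReal * f (g a) := by
  classical
  have h : ∀ b, ((p.map g) b).toReal = ∑ a : A, if b = g a then (p a).toReal else 0 := by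
    intro b
    rw [PMF.map_apply, tsum_fintype, ENNReal.toReal_sum]
    · exact Finset.sum_congr rfl fun a _ => by split <;> simp
    · intro a _; split
      · exact p.apply_ne_top a
      · simp
  simp_rw [h, Finset.sum_mul, ite_mul, zero_mul]
  rw [Finset.sum_comm]
  simp [Finset.sum_ite_eq, Finset.sum_ite_eq']

lemma sum_eval {n : ℕ} (v : Fin n) (h : Fin n → ℝ) :
    ∑ s : Fin n → Fin n, h (s v) = (n^(n-1) : ℕ) * ∑ w, h w := by
  classical
  calc ∑ s : Fin n → Fin n, h (s v)
      = ∑ p : Fin n × ({j : Fin n // j ≠ v} → Fin n), h p.1 :=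
        Fintype.sum_equiv (Equiv.funSplitAt v (Fin n)) _ _ (fun s => rfl)
    _ = (n^(n-1) : ℕ) * ∑ w, h w := by
        rw [Fintype.sum_prod_type]
        simp only [Finset.sum_const, Finset.card_univ, nsmul_eq_mul, Fintype.card_fun,
          Fintype.card_fin]
        rw [← Finset.mul_sum]
        congr 3
        rw [Fintype.card_subtype_compl, Fintype.card_subtype_eq, Fintype.card_fin]

lemma expv_formula {n k : ℕ} [NeZero n] (σ : Config n k) (g : Option (Fin k) → ℝ) :
    expv σ (fun τ => ∑ v, g (τ v)) =
      (n:ℝ)⁻¹ * ∑ o' : Option (Fin k), (cnt σ o' : ℝ) *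
        ∑ o : Option (Fin k), (cnt σ o : ℝ) * g (updateNode o' o) := by
  classical
  have hn : 0 < n := Nat.pos_of_ne_zero (NeZero.ne n)
  unfold expv step
  rw [pmf_map_sum]
  have hcard : ∀ s : Fin n → Fin n,
      ((PMF.uniformOfFintype (Fin n → Fin n)) s).toReal = ((n:ℝ)^n)⁻¹ := by
    intro s
    rw [PMF.uniformOfFintype_apply, ENNReal.toReal_inv]
    norm_num [Fintype.card_fun]
  simp_rw [hcard, ← Finset.mul_sum]
  rw [Finset.sum_comm]
  have h1 : ∀ v : Fin n, ∑ s : Fin n → Fin n, (applySample σ s v |> g)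
      = (n^(n-1) : ℕ) * ∑ o, (cnt σ o : ℝ) * g (updateNode (σ v) o) := by
    intro v
    rw [show (fun s : Fin n → Fin n => g (applySample σ s v)) =
      (fun s => (fun w => g (updateNode (σ v) (σ w))) (s v)) from rfl]
    rw [sum_eval v (fun w => g (updateNode (σ v) (σ w))),
      sum_fiber σ (fun o => g (updateNode (σ v) o))]
  simp_rw [h1]
  rw [← Finset.mul_sum, ← mul_assoc,
    sum_fiber σ (fun o' => ∑ o, (cnt σ o : ℝ) * g (updateNode o' o))]
  congr 1
  have e : n - 1 + 1 = n := Nat.succ_pred_eq_of_pos hn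
  have h2 : ((n:ℝ))^n = (n:ℝ)^(n-1) * n :=
    calc ((n:ℝ))^n = ((n:ℝ))^(n-1+1) := by rw [e]
      _ = _ := pow_succ _ _
  rw [h2]
  push_cast
  rw [mul_inv]
  have hne : ((n:ℝ))^(n-1) ≠ 0 := by positivity
  field_simp

lemma up_none {k : ℕ} : ∀ o : Option (Fin k), updateNode none o = o := fun o => rfl
lemma up_some_none {k : ℕ} (j : Fin k) : updateNode (some j) none = some j := rfl
lemma up_some_some {k : ℕ} (j i : Fin k) :
    updateNode (some j) (some i) = if i = j then some j else none := rfl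

/-- The payoff function counted per node. -/
noncomputable def gfun {k : ℕ} (i₁ : Fin k) : Option (Fin k) → ℝ :=
  fun o => (if o = some i₁ then (1:ℝ) else 0) + 2 * (if o = none then 1 else 0)

lemma gfun_none {k : ℕ} (i₁ : Fin k) : gfun i₁ (none : Option (Fin k)) = 2 := by simp [gfun]
lemma gfun_some {k : ℕ} (i₁ i : Fin k) : gfun i₁ (some i) = if i = i₁ then 1 else 0 := by
  simp [gfun]

lemma f_eq {n k : ℕ} (i₁ : Fin k) (τ : Config n k) :
    (colorCount τ i₁ : ℝ) + 2 * (undecidedCount τ : ℝ) = ∑ v, gfun i₁ (τ v) := by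
  classical
  rw [colorCount, undecidedCount, Finset.card_filter, Finset.card_filter]
  push_cast
  rw [Finset.mul_sum, ← Finset.sum_add_distrib]
  simp [gfun]

lemma D_eval {n k : ℕ} (σ : Config n k) (i₁ : Fin k) :
    ∑ o' : Option (Fin k), (cnt σ o' : ℝ) *
        ∑ o : Option (Fin k), (cnt σ o : ℝ) * gfun i₁ (updateNode o' o) =
      2 * (cnt σ none : ℝ)^2 + 2 * (cnt σ none : ℝ) * (cnt σ (some i₁) : ℝ)
        + (cnt σ (some i₁) : ℝ)^2
        + 2 * (∑ i, (cnt σ (some i) : ℝ))^2 - 2 * ∑ i, (cnt σ (some i) : ℝ)^2 := by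
  classical
  set q : ℝ := (cnt σ none : ℝ) with hq
  set c : Fin k → ℝ := fun i => (cnt σ (some i) : ℝ) with hc
  set S : ℝ := ∑ i, c i with hS
  have hA : ∑ o : Option (Fin k), (cnt σ o : ℝ) * gfun i₁ (updateNode none o)
      = 2 * q + c i₁ := by
    simp only [up_none, Fintype.sum_option, gfun_none, gfun_some]
    simp [mul_ite, Finset.sum_ite_eq', mul_comm]
    rfl
  have hB : ∀ j : Fin k, ∑ o : Option (Fin k), (cnt σ o : ℝ) * gfun i₁ (updateNode (some j) o)
      = q * (if j = i₁ then 1 else 0) + 2 * S + c j * ((if j = i₁ then 1 else 0) - 2) := by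
    intro j
    simp only [Fintype.sum_option, up_some_none, up_some_some, gfun_some, apply_ite (gfun i₁),
      gfun_none]
    have hpt : ∀ i, c i * (if i = j then (if j = i₁ then (1:ℝ) else 0) else 2)
        = 2 * c i + (if i = j then c i * ((if j = i₁ then (1:ℝ) else 0) - 2) else 0) := by
      intro i; split <;> ring
    show (q * if j = i₁ then 1 else 0) + ∑ x, c x * (if x = j then if j = i₁ then (1:ℝ) else 0 else 2) = _
    simp_rw [hpt]
    rw [Finset.sum_add_distrib, Finset.sum_ite_eq' Finset.univ j]
    simp [← Finset.mul_sum, ← hS]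
    ring
  rw [Fintype.sum_option, hA]
  simp_rw [hB]
  have hpt2 : ∀ j, c j * (q * (if j = i₁ then (1:ℝ) else 0) + 2 * S
      + c j * ((if j = i₁ then 1 else 0) - 2))
      = 2 * S * c j - 2 * (c j)^2 + (if j = i₁ then q * c j + (c j)^2 else 0) := by
    intro j; split <;> ring
  show q * (2 * q + c i₁) + ∑ x, c x * ((q * if x = i₁ then 1 else 0) + 2 * S
    + c x * ((if x = i₁ then 1 else 0) - 2)) =
    2 * q ^ 2 + 2 * q * c i₁ + c i₁ ^ 2 + 2 * S ^ 2 - 2 * ∑ i, c i ^ 2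
  simp_rw [hpt2]
  rw [Finset.sum_add_distrib, Finset.sum_ite_eq' Finset.univ i₁]
  rw [Finset.sum_sub_distrib, ← Finset.mul_sum, ← Finset.mul_sum, ← hS]
  simp only [Finset.mem_univ, if_true]
  ring

set_option maxHeartbeats 1600000 in
lemma drift_algebra (q S c₁ T γ : ℝ) (hqS : 0 < q + S) (hc1 : 0 < c₁) :
    (q+S)⁻¹*(2*q^2 + 2*q*c₁ + c₁^2 + 2*S^2 - 2*T)
      - (q+S)*(1 + ((1 - (c₁ + 2*q)/(q+S))^2 + 2*(1-γ)*(S/c₁ - 1)*(c₁/(q+S))^2))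
      = (q+S)⁻¹ * 2 * (γ*S*c₁ + (1-γ)*c₁^2 - T) := by
  have h1 : q + S ≠ 0 := ne_of_gt hqS
  have h2 : c₁ ≠ 0 := ne_of_gt hc1
  field_simp
  ring

end USDHelpers

/-- If the current configuration satisfies `c₁ ≥ (1+α) cᵢ` for some
constant `α > 0` and every color `i ≠ 1`, then, with `γ = (1+α)⁻¹`,
`E[C₁' + 2Q' | c] ≥ n (1 + Γ(c))` where
`Γ(c) = (1 - (c₁ + 2q)/n)² + 2(1-γ)(R(c) - 1)(c₁/n)²`. -/
theorem majority_drift (n k : ℕ) [NeZero n] (σ : Config n k) (i₁ : Fin k) (α : ℝ)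
    (hα : 0 < α)
    (hbias : ∀ i : Fin k, i ≠ i₁ → (1 + α) * (colorCount σ i : ℝ) ≤ (colorCount σ i₁ : ℝ)) :
    (n : ℝ) * (1 +
        ((1 - ((colorCount σ i₁ : ℝ) + 2 * (undecidedCount σ : ℝ)) / n) ^ 2 +
          2 * (1 - (1 + α)⁻¹) * (Rval σ - 1) * ((colorCount σ i₁ : ℝ) / n) ^ 2)) ≤
      expv σ (fun τ => (colorCount τ i₁ : ℝ) + 2 * (undecidedCount τ : ℝ)) := by
    classical
  have hn : (0:ℝ) < n := by
    have := Nat.pos_of_ne_zero (NeZero.ne n); exact_mod_cast this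
  set γ : ℝ := (1 + α)⁻¹ with hγ
  set q : ℝ := (undecidedCount σ : ℝ) with hqdef
  set c₁ : ℝ := (colorCount σ i₁ : ℝ) with hc₁def
  set S : ℝ := ∑ i, (colorCount σ i : ℝ) with hSdef
  set T : ℝ := ∑ i, (colorCount σ i : ℝ)^2 with hTdef
  have hα1 : (0:ℝ) < 1 + α := by linarith
  have hγ1 : γ < 1 := by
    rw [hγ]; rw [inv_lt_one_iff₀]; right; linarith
  have hγ0 : 0 < γ := by rw [hγ]; positivity
  -- rewrite the expectation
  have hE : expv σ (fun τ => (colorCount τ i₁ : ℝ) + 2 * (undecidedCount τ : ℝ))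
      = (n:ℝ)⁻¹ * (2*q^2 + 2*q*c₁ + c₁^2 + 2*S^2 - 2*T) := by
    have hfun : (fun τ : Config n k => (colorCount τ i₁ : ℝ) + 2 * (undecidedCount τ : ℝ))
        = fun τ => ∑ v, gfun i₁ (τ v) := funext (f_eq i₁)
    rw [hfun, expv_formula, D_eval]
    simp only [cnt_none, cnt_some]
    rfl
  -- basic counting identity
  have hsum : q + S = n := by
    have h0 := cnt_sum σ
    rw [Fintype.sum_option] at h0
    simp only [cnt_none, cnt_some] at h0
    rw [hqdef, hSdef]; exact h0
  have hc1nn : 0 ≤ c₁ := by rw [hc₁def]; positivity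
  have hcnn : ∀ i, (0:ℝ) ≤ (colorCount σ i : ℝ) := fun i => by positivity
  -- each color count is at most γ c₁
  have hsmall : ∀ i, i ≠ i₁ → (colorCount σ i : ℝ) ≤ γ * c₁ := by
    intro i hi
    have h1 := hbias i hi
    rw [hγ, ← div_eq_inv_mul, le_div_iff₀ hα1]
    linarith [mul_comm ((1:ℝ)+α) ((colorCount σ i : ℝ)),
      mul_comm ((colorCount σ i : ℝ)) ((1:ℝ)+α)]
  -- plurality is the count of colour i₁
  have hplur : (plur σ : ℝ) = c₁ := by
    have h2 : plur σ = colorCount σ i₁ := by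
      refine le_antisymm (Finset.sup_le fun i _ => ?_) (Finset.le_sup (Finset.mem_univ i₁))
      by_cases hi : i = i₁
      · subst hi; exact le_refl _
      · have := hsmall i hi
        have hγle : γ * c₁ ≤ c₁ := by nlinarith
        have : (colorCount σ i : ℝ) ≤ (colorCount σ i₁ : ℝ) := by
          rw [← hc₁def] at *; linarith
        exact_mod_cast this
    rw [h2, hc₁def]
  -- the key inequality
  have hkey : T ≤ γ * c₁ * S + (1-γ) * c₁^2 := by
    have hpt : ∀ j : Fin k, (colorCount σ j : ℝ)^2 - γ*c₁*(colorCount σ j : ℝ)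
        ≤ if j = i₁ then (1-γ)*c₁^2 else 0 := by
      intro j
      by_cases hj : j = i₁
      · subst hj; rw [if_pos rfl, ← hc₁def]; nlinarith
      · rw [if_neg hj]
        have h1 := hsmall j hj
        nlinarith [hcnn j]
    have h3 := Finset.sum_le_sum (fun j (_ : j ∈ Finset.univ) => hpt j)
    rw [Finset.sum_sub_distrib, ← Finset.mul_sum, Finset.sum_ite_eq' Finset.univ i₁] at h3
    simp only [Finset.mem_univ, if_true] at h3
    rw [← hSdef, ← hTdef] at h3
    linarith
  rw [hE]
  clear_value γ q c₁ S T
  rcases eq_or_lt_of_le hc1nn with hc10 | hc1pos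
  · -- degenerate case: c₁ = 0, hence all colour counts vanish
    have hall : ∀ i, (colorCount σ i : ℝ) = 0 := by
      intro i
      by_cases hi : i = i₁
      · subst hi; rw [← hc₁def]; exact hc10.symm
      · have h1 := hsmall i hi
        have h2 := hcnn i
        nlinarith
    have hS0 : S = 0 := by rw [hSdef]; exact Finset.sum_eq_zero fun i _ => hall i
    have hT0 : T = 0 := by
      rw [hTdef]; exact Finset.sum_eq_zero fun i _ => by rw [hall i]; ring
    have hqn : q = n := by linarith
    rw [← hc10, hS0, hT0, ← hqn]
    have hq0 : (0:ℝ) < q := by linarith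
    have e1 : (0 + 2*q)/q = 2 := by field_simp; ring
    have e3 : q⁻¹ * (2*q^2 + 2*q*0 + 0^2 + 2*0^2 - 2*0) = 2*q := by
      field_simp; ring
    rw [e1, e3]
    norm_num
    linarith
  · -- main case: c₁ > 0
    have hR : Rval σ = S / c₁ := by
      rw [Rval, hplur, ← hqdef]
      congr 1
      linarith
    rw [hR]
    have hn' : (n:ℝ) = q + S := hsum.symm
    have hqnn : 0 ≤ q := by rw [hqdef]; positivity
    have hqS : (0:ℝ) < q + S := by linarith
    rw [hn']
    have hid := drift_algebra q S c₁ T γ hqS hc1pos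
    have h9 : 0 ≤ (q+S)⁻¹ * 2 * (γ*S*c₁ + (1-γ)*c₁^2 - T) := by
      have h0 : 0 ≤ (q+S)⁻¹ := le_of_lt (inv_pos.mpr hqS)
      have h3 : 0 ≤ γ*S*c₁ + (1-γ)*c₁^2 - T := by linarith
      have h4 : (0:ℝ) ≤ 2 := by norm_num
      exact mul_nonneg (mul_nonneg h0 h4) h3
    linarith [hid, h9]
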